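/- Let Θ ∈ ℝ^{N×N} be invertible, Y₁, Y₂ ∈ ℝ^{p×N}, and w > 0. Define Ĉ = 2wΘΘᵀ and C^{θy} = wΘ(Y₁ − Y₂)ᵀ. Then (C^{θy})ᵀ Ĉ⁻¹ C^{θy} = (w/2)(Y₁ − Y₂)(Y₁ − Y₂)ᵀ, so that w(Y₁Y₁ᵀ + Y₂Y₂ᵀ) = (C^{θy})ᵀ Ĉ⁻¹ C^{θy} + (w/2)(Y₁ + Y₂)(Y₁ + Y₂)ᵀ, and the matrix (w/2)(Y₁ + Y₂)(Y₁ + Y₂)ᵀ is symmetric positive semidefinite. -/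

import Mathlib

open Matrix

/-- Let `Θ` be invertible, `Y₁, Y₂ ∈ ℝ^{p×N}`, `w > 0`,
`Chat = 2wΘΘᵀ` and `Cxy = wΘ(Y₁ − Y₂)ᵀ`. Then
`Cxyᵀ Chat⁻¹ Cxy = (w/2)(Y₁ − Y₂)(Y₁ − Y₂)ᵀ`, so that
`w(Y₁Y₁ᵀ + Y₂Y₂ᵀ) = Cxyᵀ Chat⁻¹ Cxy + (w/2)(Y₁ + Y₂)(Y₁ + Y₂)ᵀ`, and
`(w/2)(Y₁ + Y₂)(Y₁ + Y₂)ᵀ` is symmetric positive semidefinite. -/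
theorem unscented_covariance_decomposition
    {N p : ℕ}
    (Θ : Matrix (Fin N) (Fin N) ℝ) (hΘ : IsUnit Θ.det)
    (Y₁ Y₂ : Matrix (Fin p) (Fin N) ℝ)
    (w : ℝ) (hw : 0 < w)
    (Chat : Matrix (Fin N) (Fin N) ℝ) (hChat : Chat = (2 * w) • (Θ * Θᵀ))
    (Cxy : Matrix (Fin N) (Fin p) ℝ) (hCxy : Cxy = w • (Θ * (Y₁ - Y₂)ᵀ)) :
    Cxyᵀ * Chat⁻¹ * Cxy = (w / 2) • ((Y₁ - Y₂) * (Y₁ - Y₂)ᵀ) ∧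
      w • (Y₁ * Y₁ᵀ + Y₂ * Y₂ᵀ) =
        Cxyᵀ * Chat⁻¹ * Cxy + (w / 2) • ((Y₁ + Y₂) * (Y₁ + Y₂)ᵀ) ∧
      ((w / 2) • ((Y₁ + Y₂) * (Y₁ + Y₂)ᵀ)).PosSemidef := by
  have hΘT : IsUnit Θᵀ.det := by rwa [Matrix.det_transpose]
  have h2w : (2 * w) ≠ 0 := by positivity
  have hdet : IsUnit (Θ * Θᵀ).det := by
    rw [Matrix.det_mul, Matrix.det_transpose]; exact hΘ.mul hΘ
  have hinv : Chat⁻¹ = (2 * w)⁻¹ • (Θᵀ⁻¹ * Θ⁻¹) := by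
    letI := invertibleOfNonzero h2w
    rw [hChat, Matrix.inv_smul _ _ hdet, Matrix.mul_inv_rev,
      invOf_eq_inv (2 * w)]
  have key : Cxyᵀ * Chat⁻¹ * Cxy = (w / 2) • ((Y₁ - Y₂) * (Y₁ - Y₂)ᵀ) := by
    rw [hCxy, hinv, Matrix.transpose_smul, Matrix.transpose_mul,
      Matrix.transpose_transpose]
    simp only [Matrix.smul_mul, Matrix.mul_smul, smul_smul]
    congr 1
    · field_simp
    · calc (Y₁ - Y₂) * Θᵀ * (Θᵀ⁻¹ * Θ⁻¹) * (Θ * (Y₁ - Y₂)ᵀ)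
          = (Y₁ - Y₂) * ((Θᵀ * Θᵀ⁻¹) * (Θ⁻¹ * Θ)) * (Y₁ - Y₂)ᵀ := by
            simp only [Matrix.mul_assoc]
        _ = (Y₁ - Y₂) * (Y₁ - Y₂)ᵀ := by
            rw [Matrix.mul_nonsing_inv _ hΘT, Matrix.nonsing_inv_mul _ hΘ,
              Matrix.one_mul, Matrix.mul_one]
  refine ⟨key, ?_, ?_⟩
  · rw [key]
    have : (Y₁ - Y₂) * (Y₁ - Y₂)ᵀ + (Y₁ + Y₂) * (Y₁ + Y₂)ᵀ
        = (2 : ℝ) • (Y₁ * Y₁ᵀ + Y₂ * Y₂ᵀ) := by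
      simp only [Matrix.transpose_sub, Matrix.transpose_add, Matrix.sub_mul,
        Matrix.mul_sub, Matrix.add_mul, Matrix.mul_add, two_smul]
      abel
    rw [← smul_add, this, smul_smul]
    congr 1
    field_simp
  · have h := Matrix.posSemidef_conjTranspose_mul_self
      (Real.sqrt (w / 2) • (Y₁ + Y₂)ᵀ)
    have hs : Real.sqrt (w / 2) * Real.sqrt (w / 2) = w / 2 :=
      Real.mul_self_sqrt (by positivity)
    have hconj : ((Y₁ + Y₂)ᵀᴴ : Matrix (Fin p) (Fin N) ℝ) = Y₁ + Y₂ := by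
      ext i j; simp [Matrix.conjTranspose_apply]
    rwa [Matrix.conjTranspose_smul, Matrix.smul_mul, Matrix.mul_smul,
      smul_smul, hconj, star_trivial, hs] at h
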